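/- arXiv:2411.09653 — 3 statements merged into one kernel-verified Lean document; each statement's English description precedes it below -/
import Mathlib

section
/- Let m ∈ ℝ^n, y ∈ ℝ^m, H an m×n real matrix, and let Σ (n×n) and R (m×m) be symmetric positive definite matrices. Define J(x) := (x−m)ᵀΣ⁻¹(x−m) + (y−Hx)ᵀR⁻¹(y−Hx) for x ∈ ℝ^n, and K := ΣHᵀ(HΣHᵀ+R)⁻¹. Then x* := m + K(y−Hm) is the unique minimizer of J over ℝ^n. -/
open Matrix
open scoped Matrix

private lemma dot_symm {k : ℕ} (M : Matrix (Fin k) (Fin k) ℝ) (hM : M.IsHermitian)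
    (u v : Fin k → ℝ) : u ⬝ᵥ M *ᵥ v = v ⬝ᵥ M *ᵥ u := by
  rw [dotProduct_mulVec, ← mulVec_transpose]
  have ht : Mᵀ = M := by simpa [Matrix.IsHermitian, conjTranspose_eq_transpose_of_trivial] using hM
  rw [ht, dotProduct_comm]

private lemma dot_move {k l : ℕ} (H : Matrix (Fin k) (Fin l) ℝ) (d : Fin l → ℝ)
    (v : Fin k → ℝ) : (H *ᵥ d) ⬝ᵥ v = d ⬝ᵥ Hᵀ *ᵥ v := by
  rw [dotProduct_mulVec, vecMul_transpose]

private lemma quad_expand {k : ℕ} (M : Matrix (Fin k) (Fin k) ℝ) (hM : M.IsHermitian)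
    (a b : Fin k → ℝ) :
    (a + b) ⬝ᵥ M *ᵥ (a + b) = a ⬝ᵥ M *ᵥ a + 2 * (b ⬝ᵥ M *ᵥ a) + b ⬝ᵥ M *ᵥ b := by
  simp only [mulVec_add, dotProduct_add, add_dotProduct]
  rw [dot_symm M hM a b]
  ring

/-- **Kalman filter update as the unique minimizer of the quadratic cost.**
For `m ∈ ℝ^n`, `y ∈ ℝ^m`, an `m × n` matrix `H`, and symmetric positive definite
`Σ` (`n × n`) and `R` (`m × m`), the function
`J(x) = (x−m)ᵀ Σ⁻¹ (x−m) + (y−Hx)ᵀ R⁻¹ (y−Hx)` has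
`x* = m + K (y − H m)`, with Kalman gain `K = Σ Hᵀ (H Σ Hᵀ + R)⁻¹`, as its unique
minimizer over `ℝ^n`. -/
theorem kalman_update_unique_minimizer {n m : ℕ}
    (mv : Fin n → ℝ) (y : Fin m → ℝ)
    (H : Matrix (Fin m) (Fin n) ℝ)
    (S : Matrix (Fin n) (Fin n) ℝ) (R : Matrix (Fin m) (Fin m) ℝ)
    (hS : S.PosDef) (hR : R.PosDef)
    (J : (Fin n → ℝ) → ℝ)
    (hJ : ∀ x, J x = (x - mv) ⬝ᵥ (S⁻¹).mulVec (x - mv)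
        + (y - H.mulVec x) ⬝ᵥ (R⁻¹).mulVec (y - H.mulVec x))
    (K : Matrix (Fin n) (Fin m) ℝ)
    (hK : K = S * Hᵀ * (H * S * Hᵀ + R)⁻¹)
    (xstar : Fin n → ℝ)
    (hxstar : xstar = mv + K.mulVec (y - H.mulVec mv)) :
    (∀ x, J xstar ≤ J x) ∧ (∀ x, x ≠ xstar → J xstar < J x) := by
  have hSi : (S⁻¹).PosDef := hS.inv
  have hRi : (R⁻¹).PosDef := hR.inv
  set A : Matrix (Fin n) (Fin n) ℝ := S⁻¹ + Hᵀ * R⁻¹ * H with hA_def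
  -- A is positive definite
  have hHRH : (Hᵀ * R⁻¹ * H).PosSemidef := by
    have := hRi.posSemidef.conjTranspose_mul_mul_same H
    simpa [conjTranspose_eq_transpose_of_trivial] using this
  have hA : A.PosDef := hSi.add_posSemidef hHRH
  -- invertibility facts
  have hSu : IsUnit S.det := hS.det_pos.ne'.isUnit
  have hRu : IsUnit R.det := hR.det_pos.ne'.isUnit
  have hHSH : (H * S * Hᵀ).PosSemidef := by
    have := hS.posSemidef.mul_mul_conjTranspose_same H
    simpa [conjTranspose_eq_transpose_of_trivial] using this
  have hMpd : (H * S * Hᵀ + R).PosDef := Matrix.PosDef.posSemidef_add hHSH hR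
  have hMu : IsUnit (H * S * Hᵀ + R).det := hMpd.det_pos.ne'.isUnit
  -- the gain identity  A * K = Hᵀ * R⁻¹
  have hAK : A * K = Hᵀ * R⁻¹ := by
    have h1 : A * (S * Hᵀ) = Hᵀ * R⁻¹ * (H * S * Hᵀ + R) := by
      have e1 : A * (S * Hᵀ) = S⁻¹ * (S * Hᵀ) + Hᵀ * (R⁻¹ * (H * (S * Hᵀ))) := by
        rw [hA_def, Matrix.add_mul]; simp only [Matrix.mul_assoc]
      have e2 : S⁻¹ * (S * Hᵀ) = Hᵀ := by
        rw [← Matrix.mul_assoc, Matrix.nonsing_inv_mul S hSu, Matrix.one_mul]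
      have e3 : Hᵀ * R⁻¹ * (H * S * Hᵀ + R)
          = Hᵀ * (R⁻¹ * (H * (S * Hᵀ))) + Hᵀ := by
        rw [Matrix.mul_add]
        congr 1
        · simp only [Matrix.mul_assoc]
        · rw [Matrix.mul_assoc, Matrix.nonsing_inv_mul R hRu, Matrix.mul_one]
      rw [e1, e2, e3, add_comm]
    rw [hK, ← Matrix.mul_assoc, h1,
      Matrix.mul_nonsing_inv_cancel_right _ _ hMu]
  -- the normal equation
  have hnorm : A *ᵥ xstar = S⁻¹ *ᵥ mv + (Hᵀ * R⁻¹) *ᵥ y := by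
    have h2 : A *ᵥ (K *ᵥ (y - H *ᵥ mv)) = (Hᵀ * R⁻¹) *ᵥ (y - H *ᵥ mv) := by
      rw [mulVec_mulVec, hAK]
    rw [hxstar, mulVec_add, h2, mulVec_sub, hA_def, add_mulVec, ← mulVec_mulVec]
    abel
  have hnorm' : S⁻¹ *ᵥ xstar + (Hᵀ * (R⁻¹ * H)) *ᵥ xstar
      = S⁻¹ *ᵥ mv + (Hᵀ * R⁻¹) *ᵥ y := by
    rw [← Matrix.mul_assoc, ← add_mulVec, ← hA_def, hnorm]
  -- key expansion: J x = J xstar + dᵀ A d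
  have key : ∀ x, J x = J xstar + (x - xstar) ⬝ᵥ A *ᵥ (x - xstar) := by
    intro x
    set d : Fin n → ℝ := x - xstar with hd
    have e1 : x - mv = (xstar - mv) + d := by rw [hd]; abel
    have e2 : y - H *ᵥ x = (y - H *ᵥ xstar) + (-(H *ᵥ d)) := by
      rw [hd, mulVec_sub]; abel
    rw [hJ x, hJ xstar, e1, e2, quad_expand _ hSi.isHermitian, quad_expand _ hRi.isHermitian]
    have c1 : (-(H *ᵥ d)) ⬝ᵥ (R⁻¹ *ᵥ (y - H *ᵥ xstar))
        = -(d ⬝ᵥ Hᵀ *ᵥ (R⁻¹ *ᵥ (y - H *ᵥ xstar))) := by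
      rw [neg_dotProduct, dot_move]
    have c2 : (-(H *ᵥ d)) ⬝ᵥ R⁻¹ *ᵥ (-(H *ᵥ d)) = d ⬝ᵥ (Hᵀ * (R⁻¹ * H)) *ᵥ d := by
      rw [mulVec_neg, dotProduct_neg, neg_dotProduct, neg_neg, dot_move]
      simp only [mulVec_mulVec]
    have hcross : d ⬝ᵥ S⁻¹ *ᵥ (xstar - mv) - d ⬝ᵥ Hᵀ *ᵥ (R⁻¹ *ᵥ (y - H *ᵥ xstar)) = 0 := by
      have hz : S⁻¹ *ᵥ (xstar - mv) - Hᵀ *ᵥ (R⁻¹ *ᵥ (y - H *ᵥ xstar)) = 0 := by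
        simp only [mulVec_sub, mulVec_mulVec, Matrix.mul_assoc]
        rw [sub_eq_zero]
        linear_combination hnorm'
      rw [← dotProduct_sub, hz, dotProduct_zero]
    have hAd : d ⬝ᵥ A *ᵥ d = d ⬝ᵥ S⁻¹ *ᵥ d + d ⬝ᵥ (Hᵀ * (R⁻¹ * H)) *ᵥ d := by
      rw [hA_def, Matrix.mul_assoc, add_mulVec, dotProduct_add]
    rw [c1, c2, hAd]
    linarith [hcross]
  have star_eq : ∀ v : Fin n → ℝ, star v = v := fun v => funext fun i => star_trivial _
  constructor
  · intro x
    rw [key x]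
    have h := hA.posSemidef.dotProduct_mulVec_nonneg (x - xstar)
    rw [star_eq] at h
    linarith
  · intro x hx
    rw [key x]
    have hdne : x - xstar ≠ 0 := sub_ne_zero.mpr hx
    have h := hA.dotProduct_mulVec_pos hdne
    rw [star_eq] at h
    linarith
end

section
/- Let X̄ be a square-integrable random vector on ℝ^n with mean m and covariance Σ, and let W̄ be a square-integrable random vector on ℝ^m, independent of X̄, with mean 0 and covariance R. Let H be an m×n matrix such that HΣHᵀ + R is invertible, set Ȳ := HX̄ + W̄ and K := ΣHᵀ(HΣHᵀ+R)⁻¹. Then for every y ∈ ℝ^m, the random vector X̄_{|y} := X̄ + K(y − Ȳ) has mean E[X̄_{|y}] = m + K(y − Hm) and covariance Cov(X̄_{|y}) = Σ − ΣHᵀ(HΣHᵀ+R)⁻¹HΣ. -/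
open MeasureTheory ProbabilityTheory Matrix
open scoped Matrix ENNReal

lemma my_int_mul {Ω : Type*} [MeasurableSpace Ω] {P : Measure Ω} {f g : Ω → ℝ}
    (hf : MemLp f 2 P) (hg : MemLp g 2 P) :
    Integrable (fun ω => f ω * g ω) P := by
  have h : MemLp (f • g) 1 P := hg.smul hf
    (hpqr := ⟨by rw [inv_one]; exact ENNReal.inv_two_add_inv_two⟩)
  have := memLp_one_iff_integrable.mp h
  exact this

lemma my_mat_alg {n p : ℕ} (S : Matrix (Fin n) (Fin n) ℝ) (R : Matrix (Fin p) (Fin p) ℝ)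
    (H : Matrix (Fin p) (Fin n) ℝ) (hinv : IsUnit (H * S * Hᵀ + R))
    (K : Matrix (Fin n) (Fin p) ℝ) (hK : K = S * Hᵀ * (H * S * Hᵀ + R)⁻¹) :
    (1 - K * H) * S * (1 - K * H)ᵀ + K * R * Kᵀ
      = S - S * Hᵀ * (H * S * Hᵀ + R)⁻¹ * H * S := by
  have hdet : IsUnit (H * S * Hᵀ + R).det := (Matrix.isUnit_iff_isUnit_det _).mp hinv
  have hKA : K * (H * S * Hᵀ + R) = S * Hᵀ := by
    rw [hK]; exact Matrix.nonsing_inv_mul_cancel_right _ _ hdet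
  have h2 : K * (H * (S * (Hᵀ * Kᵀ))) + K * (R * Kᵀ) = S * (Hᵀ * Kᵀ) := by
    have h := congrArg (fun M => M * Kᵀ) hKA
    simpa only [Matrix.add_mul, Matrix.mul_add, Matrix.mul_assoc] using h
  have hright : S * Hᵀ * (H * S * Hᵀ + R)⁻¹ * H * S = K * (H * S) := by
    rw [hK]; simp only [Matrix.mul_assoc]
  have expand : (1 - K * H) * S * (1 - K * H)ᵀ + K * R * Kᵀ
      = S - S * (Hᵀ * Kᵀ) - K * (H * S) + (K * (H * (S * (Hᵀ * Kᵀ))) + K * (R * Kᵀ)) := by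
    simp only [Matrix.transpose_sub, Matrix.transpose_mul, Matrix.transpose_one,
      Matrix.sub_mul, Matrix.mul_sub, Matrix.one_mul, Matrix.mul_one, Matrix.mul_assoc]
    abel
  rw [expand, h2, hright]
  abel

lemma my_integral_sum_mul {ι κ Ω : Type*} [Fintype ι] [Fintype κ] [MeasurableSpace Ω]
    (P : Measure Ω) (a : ι → ℝ) (b : κ → ℝ) (f : ι → Ω → ℝ) (g : κ → Ω → ℝ)
    (hint : ∀ l k, Integrable (fun ω => f l ω * g k ω) P) :
    ∫ ω, (∑ l, a l * f l ω) * (∑ k, b k * g k ω) ∂P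
      = ∑ l, ∑ k, a l * b k * ∫ ω, f l ω * g k ω ∂P := by
  have h1 : ∀ ω, (∑ l, a l * f l ω) * (∑ k, b k * g k ω)
      = ∑ l, ∑ k, a l * b k * (f l ω * g k ω) := by
    intro ω
    rw [Finset.sum_mul_sum]
    exact Finset.sum_congr rfl fun l _ => Finset.sum_congr rfl fun k _ => by ring
  simp_rw [h1]
  rw [integral_finset_sum _
    (fun l _ => integrable_finset_sum _ (fun k _ => (hint l k).const_mul _))]
  refine Finset.sum_congr rfl fun l _ => ?_
  rw [integral_finset_sum _ (fun k _ => (hint l k).const_mul _)]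
  exact Finset.sum_congr rfl fun k _ => integral_const_mul _ _

/-- **First two moments of the EnKF update (no Gaussianity assumed).**
Let `X̄` be square-integrable on `ℝ^n` with mean `m` and covariance `Σ`, and `W̄`
square-integrable on `ℝ^m`, independent of `X̄`, with mean `0` and covariance `R`.
With `Ȳ = H X̄ + W̄`, `K = Σ Hᵀ (H Σ Hᵀ + R)⁻¹` (assuming `H Σ Hᵀ + R` invertible),
the random vector `X̄_{|y} = X̄ + K (y − Ȳ)` has mean `m + K(y − Hm)` and covariance
`Σ − Σ Hᵀ (H Σ Hᵀ + R)⁻¹ H Σ`, for every `y`. -/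
theorem enkf_update_moments {n p : ℕ} {Ω : Type*} [MeasurableSpace Ω]
    (P : Measure Ω) [IsProbabilityMeasure P]
    (Xb : Ω → Fin n → ℝ) (Wb : Ω → Fin p → ℝ)
    (hXbm : Measurable Xb) (hWbm : Measurable Wb)
    (hX2 : ∀ i, MemLp (fun ω => Xb ω i) 2 P)
    (hW2 : ∀ j, MemLp (fun ω => Wb ω j) 2 P)
    (m : Fin n → ℝ) (hmean : ∀ i, ∫ ω, Xb ω i ∂P = m i)
    (S : Matrix (Fin n) (Fin n) ℝ)
    (hcov : ∀ i j, ∫ ω, (Xb ω i - m i) * (Xb ω j - m j) ∂P = S i j)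
    (hWmean : ∀ j, ∫ ω, Wb ω j ∂P = 0)
    (R : Matrix (Fin p) (Fin p) ℝ)
    (hWcov : ∀ i j, ∫ ω, Wb ω i * Wb ω j ∂P = R i j)
    (hindep : IndepFun Xb Wb P)
    (H : Matrix (Fin p) (Fin n) ℝ) (hinv : IsUnit (H * S * Hᵀ + R))
    (K : Matrix (Fin n) (Fin p) ℝ) (hK : K = S * Hᵀ * (H * S * Hᵀ + R)⁻¹)
    (Yb : Ω → Fin p → ℝ) (hYb : Yb = fun ω => H.mulVec (Xb ω) + Wb ω)
    (y : Fin p → ℝ) :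
    (∀ i, ∫ ω, (Xb ω + K.mulVec (y - Yb ω)) i ∂P
        = (m + K.mulVec (y - H.mulVec m)) i) ∧
    (∀ i j, ∫ ω, ((Xb ω + K.mulVec (y - Yb ω)) i - (m + K.mulVec (y - H.mulVec m)) i)
          * ((Xb ω + K.mulVec (y - Yb ω)) j - (m + K.mulVec (y - H.mulVec m)) j) ∂P
        = (S - S * Hᵀ * (H * S * Hᵀ + R)⁻¹ * H * S) i j) := by
  -- notation
  set M : Matrix (Fin n) (Fin n) ℝ := 1 - K * H with hM
  -- basic integrability
  have hXc2 : ∀ l, MemLp (fun ω => Xb ω l - m l) 2 P :=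
    fun l => (hX2 l).sub (memLp_const (m l))
  have hXcInt : ∀ l, Integrable (fun ω => Xb ω l - m l) P :=
    fun l => (hXc2 l).integrable one_le_two
  have hWInt : ∀ k, Integrable (fun ω => Wb ω k) P :=
    fun k => (hW2 k).integrable one_le_two
  have hXcMean : ∀ l, ∫ ω, Xb ω l - m l ∂P = 0 := by
    intro l
    rw [integral_sub ((hX2 l).integrable one_le_two) (integrable_const _)]
    simp [hmean l]
  -- vector-level decomposition
  have hvec : ∀ ω, Xb ω + K.mulVec (y - Yb ω)
      = (m + K.mulVec (y - H.mulVec m))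
        + (M.mulVec (Xb ω - m) - K.mulVec (Wb ω)) := by
    intro ω
    rw [hYb]
    have hy : y - (H.mulVec (Xb ω) + Wb ω)
        = (y - H.mulVec m) - H.mulVec (Xb ω - m) - Wb ω := by
      rw [Matrix.mulVec_sub]; abel
    rw [hy, Matrix.mulVec_sub, Matrix.mulVec_sub, hM, Matrix.sub_mulVec,
      Matrix.one_mulVec, ← Matrix.mulVec_mulVec]
    abel
  -- entrywise decomposition
  have hpt : ∀ ω i, (Xb ω + K.mulVec (y - Yb ω)) i
      = (m + K.mulVec (y - H.mulVec m)) i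
        + ((∑ l, M i l * (Xb ω l - m l)) - ∑ k, K i k * Wb ω k) := by
    intro ω i
    have := congrFun (hvec ω) i
    simpa [Matrix.mulVec, dotProduct, Pi.sub_apply] using this
  constructor
  · -- mean
    intro i
    have hrw : (fun ω => (Xb ω + K.mulVec (y - Yb ω)) i)
        = fun ω => (m + K.mulVec (y - H.mulVec m)) i
            + ((∑ l, M i l * (Xb ω l - m l)) - ∑ k, K i k * Wb ω k) :=
      funext fun ω => hpt ω i
    rw [hrw]
    have hA : Integrable (fun ω => ∑ l, M i l * (Xb ω l - m l)) P :=
      integrable_finset_sum _ fun l _ => (hXcInt l).const_mul _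
    have hB : Integrable (fun ω => ∑ k, K i k * Wb ω k) P :=
      integrable_finset_sum _ fun k _ => (hWInt k).const_mul _
    have hAB : Integrable
        (fun ω => (∑ l, M i l * (Xb ω l - m l)) - ∑ k, K i k * Wb ω k) P := by
      exact hA.sub hB
    rw [integral_add (integrable_const _) hAB, integral_const,
      integral_sub hA hB,
      integral_finset_sum _ (fun l _ => (hXcInt l).const_mul _),
      integral_finset_sum _ (fun k _ => (hWInt k).const_mul _)]
    simp [integral_const_mul, hXcMean, hWmean]
  · -- covariance
    intro i j
    -- combined index
    set c : Fin n → (Fin n ⊕ Fin p) → ℝ :=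
      fun i => Sum.elim (fun l => M i l) (fun k => -K i k) with hc
    set F : (Fin n ⊕ Fin p) → Ω → ℝ :=
      Sum.elim (fun l ω => Xb ω l - m l) (fun k ω => Wb ω k) with hF
    have hF2 : ∀ a, MemLp (F a) 2 P := by
      rintro (l | k)
      · exact hXc2 l
      · exact hW2 k
    have hFint : ∀ a b, Integrable (fun ω => F a ω * F b ω) P :=
      fun a b => my_int_mul (hF2 a) (hF2 b)
    -- cross moments vanish
    have hXWzero : ∀ l k, ∫ ω, (Xb ω l - m l) * Wb ω k ∂P = 0 := by
      intro l k
      have hi : IndepFun (fun ω => Xb ω l - m l) (fun ω => Wb ω k) P :=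
        hindep.comp ((measurable_pi_apply l).sub measurable_const)
          (measurable_pi_apply k)
      have := hi.integral_fun_mul_eq_mul_integral (hXc2 l).aestronglyMeasurable
        (hW2 k).aestronglyMeasurable
      calc ∫ ω, (Xb ω l - m l) * Wb ω k ∂P
          = (∫ ω, Xb ω l - m l ∂P) * ∫ ω, Wb ω k ∂P := this
        _ = 0 := by rw [hXcMean l, hWmean k]; ring
    have hWXzero : ∀ k l, ∫ ω, Wb ω k * (Xb ω l - m l) ∂P = 0 := by
      intro k l
      rw [show (fun ω => Wb ω k * (Xb ω l - m l))
          = fun ω => (Xb ω l - m l) * Wb ω k from funext fun ω => mul_comm _ _]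
      exact hXWzero l k
    -- rewrite the deviations as single sums
    have hsum : ∀ i ω,
        (∑ l, M i l * (Xb ω l - m l)) - ∑ k, K i k * Wb ω k
          = ∑ a, c i a * F a ω := by
      intro i ω
      rw [Fintype.sum_sum_type]
      simp [hc, hF, sub_eq_add_neg, Finset.sum_neg_distrib, neg_mul]
    have hrw : (fun ω => ((Xb ω + K.mulVec (y - Yb ω)) i
            - (m + K.mulVec (y - H.mulVec m)) i)
          * ((Xb ω + K.mulVec (y - Yb ω)) j
            - (m + K.mulVec (y - H.mulVec m)) j))
        = fun ω => (∑ a, c i a * F a ω) * (∑ a, c j a * F a ω) := by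
      funext ω
      rw [hpt ω i, hpt ω j, ← hsum i ω, ← hsum j ω]
      ring
    rw [hrw, my_integral_sum_mul P (c i) (c j) F F hFint]
    -- evaluate the double sum
    rw [Fintype.sum_sum_type]
    simp only [Fintype.sum_sum_type, hc, hF, Sum.elim_inl, Sum.elim_inr,
      hcov, hWcov, hXWzero, hWXzero, mul_zero, neg_mul, mul_neg, neg_neg,
      Finset.sum_const_zero, add_zero, zero_add, neg_zero]
    -- now pure finite sums versus matrix entries
    rw [← my_mat_alg S R H hinv K hK, ← hM]
    have e1 : (M * S * Mᵀ) i j = ∑ l, ∑ l', M i l * M j l' * S l l' := by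
      simp only [Matrix.mul_apply, Matrix.transpose_apply, Finset.sum_mul]
      rw [Finset.sum_comm]
      exact Finset.sum_congr rfl fun l _ => Finset.sum_congr rfl fun l' _ => by ring
    have e2 : (K * R * Kᵀ) i j = ∑ k, ∑ k', K i k * K j k' * R k k' := by
      simp only [Matrix.mul_apply, Matrix.transpose_apply, Finset.sum_mul]
      rw [Finset.sum_comm]
      exact Finset.sum_congr rfl fun l _ => Finset.sum_congr rfl fun l' _ => by ring
    rw [Matrix.add_apply, e1, e2]
end

section
/- Let (X, Y) be jointly distributed random vectors on ℝ^n × ℝ^m, and let X̄ be a random vector with the same law P_X as X and independent of Y. Let T : ℝ^n × ℝ^m → ℝ^n be a measurable map such that the pair (T(X̄, Y), Y) has the same joint law as (X, Y). Then for P_Y-almost every y, the pushforward measure T(·, y)_# P_X equals the conditional distribution P_{X|Y}(·|y) of X given Y = y. -/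
open MeasureTheory ProbabilityTheory

/-- **From the joint-law condition to the pointwise consistency condition.**
Let `(X, Y)` be jointly distributed on `ℝ^n × ℝ^m`, let `X̄` have the law of `X`
and be independent of `Y`, and let `T` be a measurable map such that
`(T(X̄, Y), Y)` has the same joint law as `(X, Y)`. Then for `P_Y`-a.e. `y`,
the pushforward `T(·, y)_# P_X` equals the conditional distribution of `X`
given `Y = y`. -/
theorem pushforward_eq_condDistrib_of_joint_law {n m : ℕ} {Ω : Type*} [MeasurableSpace Ω]
    (P : Measure Ω) [IsProbabilityMeasure P]
    (X : Ω → Fin n → ℝ) (Y : Ω → Fin m → ℝ)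
    (hXm : Measurable X) (hYm : Measurable Y)
    (Xb : Ω → Fin n → ℝ) (hXbm : Measurable Xb)
    (hXblaw : P.map Xb = P.map X) (hXbY : IndepFun Xb Y P)
    (T : (Fin n → ℝ) → (Fin m → ℝ) → (Fin n → ℝ))
    (hTm : Measurable fun q : (Fin n → ℝ) × (Fin m → ℝ) => T q.1 q.2)
    (hjoint : P.map (fun ω => (T (Xb ω) (Y ω), Y ω)) = P.map (fun ω => (X ω, Y ω))) :
    ∀ᵐ y ∂(P.map Y), (P.map X).map (fun x => T x y) = condDistrib X Y P y := by
  have hTy : ∀ y, Measurable fun x => T x y := fun y =>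
    hTm.comp (measurable_id.prodMk measurable_const)
  -- the candidate kernel
  set κ : Kernel (Fin m → ℝ) (Fin n → ℝ) :=
    { toFun := fun y => (P.map X).map (fun x => T x y)
      measurable' := by
        refine Measure.measurable_of_measurable_coe _ fun s hs => ?_
        simp_rw [Measure.map_apply (hTy _) hs]
        have : ∀ y, (fun x => T x y) ⁻¹' s
            = (fun x => (x, y)) ⁻¹' ((fun q : (Fin n → ℝ) × (Fin m → ℝ) => T q.1 q.2) ⁻¹' s) := by
          intro y; rfl
        simp_rw [this]
        exact measurable_measure_prodMk_right (hTm hs) } with hκdef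
  have hκ : ∀ y, κ y = (P.map X).map (fun x => T x y) := fun y => rfl
  have : IsMarkovKernel κ := by
    refine ⟨fun y => ⟨?_⟩⟩
    rw [hκ, Measure.map_apply (hTy y) MeasurableSet.univ]
    have : IsProbabilityMeasure (P.map X) := Measure.isProbabilityMeasure_map hXm.aemeasurable
    simp
  have hprod : P.map (fun ω => (Y ω, Xb ω)) = (P.map Y).prod (P.map Xb) :=
    (indepFun_iff_map_prod_eq_prod_map_map hYm.aemeasurable hXbm.aemeasurable).mp hXbY.symm
  have hcomp : P.map (fun ω => (Y ω, X ω)) = (P.map Y) ⊗ₘ κ := by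
    -- swap hjoint
    have hswap : P.map (fun ω => (Y ω, X ω)) = P.map (fun ω => (Y ω, T (Xb ω) (Y ω))) := by
      have h1 : P.map (fun ω => (Y ω, X ω))
          = (P.map (fun ω => (X ω, Y ω))).map Prod.swap := by
        rw [Measure.map_map measurable_swap (hXm.prodMk hYm)]; rfl
      have h2 : P.map (fun ω => (Y ω, T (Xb ω) (Y ω)))
          = (P.map (fun ω => (T (Xb ω) (Y ω), Y ω))).map Prod.swap := by
        rw [Measure.map_map measurable_swap
          (show Measurable fun ω => (T (Xb ω) (Y ω), Y ω) from
            ((hTm.comp (hXbm.prodMk hYm)).prodMk hYm))]; rfl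
      rw [h1, h2, hjoint]
    rw [hswap]
    have hTYXb : P.map (fun ω => (Y ω, T (Xb ω) (Y ω)))
        = ((P.map Y).prod (P.map X)).map (fun p => (p.1, T p.2 p.1)) := by
      rw [← hXblaw, ← hprod,
        Measure.map_map
          (show Measurable fun p : (Fin m → ℝ) × (Fin n → ℝ) => (p.1, T p.2 p.1) from
            measurable_fst.prodMk (hTm.comp (measurable_snd.prodMk measurable_fst)))
          (hYm.prodMk hXbm)]
      rfl
    rw [hTYXb]
    ext s hs
    have hg : Measurable fun p : (Fin m → ℝ) × (Fin n → ℝ) => (p.1, T p.2 p.1) :=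
      measurable_fst.prodMk (hTm.comp (measurable_snd.prodMk measurable_fst))
    rw [Measure.map_apply hg hs, Measure.compProd_apply hs,
      Measure.prod_apply (hg hs)]
    refine lintegral_congr fun y => ?_
    rw [hκ, Measure.map_apply (hTy y) (measurable_prodMk_left hs)]
    rfl
  have := condDistrib_ae_eq_of_measure_eq_compProd_of_measurable hYm hXm (κ := κ) hcomp
  filter_upwards [this] with y hy
  rw [hy, hκ]
end
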